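/- Let a, b > 0 be real numbers with a/b irrational, and define H : ℝ⁴ → ℝ by H(x) = (x₁² + x₂²)/a + (x₃² + x₄²)/b. Then for every s > 0, the level set H⁻¹(s) contains exactly two closed orbits of X_H: namely, the set of closed orbits contained in H⁻¹(s) is exactly { {x : x₃ = x₄ = 0 and x₁² + x₂² = a·s}, {x : x₁ = x₂ = 0 and x₃² + x₄² = b·s} }. -/

import Mathlib

/-!
Statement 6: For `H(x) = (x₁² + x₂²)/a + (x₃² + x₄²)/b` with `a, b > 0` and `a/b`
irrational, every level set `H⁻¹(s)`, `s > 0`, contains exactly two closed orbits: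
the two round circles in the coordinate symplectic planes.
-/

open Set

/-- The Hamiltonian vector field of `H : ℝ⁴ → ℝ` for the standard symplectic form
`dx₁∧dx₂ + dx₃∧dx₄`: `X_H(x) = (∂₂H, −∂₁H, ∂₄H, −∂₃H)`. -/
noncomputable def hamVF (H : (Fin 4 → ℝ) → ℝ) (x : Fin 4 → ℝ) : Fin 4 → ℝ :=
  ![fderiv ℝ H x (Pi.single (1 : Fin 4) (1 : ℝ)),
    -fderiv ℝ H x (Pi.single (0 : Fin 4) (1 : ℝ)),
    fderiv ℝ H x (Pi.single (3 : Fin 4) (1 : ℝ)),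
    -fderiv ℝ H x (Pi.single (2 : Fin 4) (1 : ℝ))]

/-- A trajectory of the Hamiltonian flow of `H`. -/
def IsTrajectory (H : (Fin 4 → ℝ) → ℝ) (γ : ℝ → Fin 4 → ℝ) : Prop :=
  ∀ t : ℝ, HasDerivAt γ (hamVF H (γ t)) t

/-- A closed orbit: the image of a nonconstant periodic trajectory. -/
def IsClosedOrbit (H : (Fin 4 → ℝ) → ℝ) (Γ : Set (Fin 4 → ℝ)) : Prop :=
  ∃ γ : ℝ → Fin 4 → ℝ, IsTrajectory H γ ∧ (∃ T > (0 : ℝ), ∀ t, γ (t + T) = γ t) ∧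
    (∃ t, γ t ≠ γ 0) ∧ Γ = Set.range γ

lemma const_of_hasDerivAt_zero {f : ℝ → ℝ} (h : ∀ t, HasDerivAt f 0 t) (t : ℝ) : f t = f 0 :=
  is_const_of_deriv_eq_zero (fun u => (h u).differentiableAt) (fun u => (h u).deriv) t 0

lemma rot_sol {ω : ℝ} {f g : ℝ → ℝ}
    (hf : ∀ t, HasDerivAt f (ω * g t) t) (hg : ∀ t, HasDerivAt g (-(ω * f t)) t) (t : ℝ) :
    f t = f 0 * Real.cos (ω * t) + g 0 * Real.sin (ω * t) ∧
    g t = -(f 0) * Real.sin (ω * t) + g 0 * Real.cos (ω * t) := by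
  have hc : ∀ u : ℝ, HasDerivAt (fun u => Real.cos (ω * u)) (-Real.sin (ω * u) * ω) u := by
    intro u
    simpa [Function.comp_def] using (Real.hasDerivAt_cos (ω * u)).comp u ((hasDerivAt_id u).const_mul ω)
  have hs : ∀ u : ℝ, HasDerivAt (fun u => Real.sin (ω * u)) (Real.cos (ω * u) * ω) u := by
    intro u
    simpa [Function.comp_def] using (Real.hasDerivAt_sin (ω * u)).comp u ((hasDerivAt_id u).const_mul ω)
  have hp : ∀ u : ℝ, HasDerivAt (fun u => f u * Real.cos (ω * u) - g u * Real.sin (ω * u)) 0 u := by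
    intro u
    have := ((hf u).mul (hc u)).sub ((hg u).mul (hs u))
    exact this.congr_deriv (by ring)
  have hq : ∀ u : ℝ, HasDerivAt (fun u => f u * Real.sin (ω * u) + g u * Real.cos (ω * u)) 0 u := by
    intro u
    have := ((hf u).mul (hs u)).add ((hg u).mul (hc u))
    exact this.congr_deriv (by ring)
  have h1 : f t * Real.cos (ω * t) - g t * Real.sin (ω * t) = f 0 := by
    have := const_of_hasDerivAt_zero hp t
    simpa using this
  have h2 : f t * Real.sin (ω * t) + g t * Real.cos (ω * t) = g 0 := by
    have := const_of_hasDerivAt_zero hq t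
    simpa using this
  have hcs := Real.sin_sq_add_cos_sq (ω * t)
  constructor
  · linear_combination Real.cos (ω * t) * h1 + Real.sin (ω * t) * h2 - f t * hcs
  · linear_combination -Real.sin (ω * t) * h1 + Real.cos (ω * t) * h2 - g t * hcs

lemma exists_polar (p q : ℝ) {R : ℝ} (hR : 0 < R) (h : p ^ 2 + q ^ 2 = R ^ 2) :
    ∃ α, p = R * Real.cos α ∧ q = R * Real.sin α := by
  have hz : (⟨p, q⟩ : ℂ) ≠ 0 := by
    intro h0
    rw [Complex.ext_iff] at h0
    simp only [Complex.zero_re, Complex.zero_im] at h0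
    nlinarith [h0.1, h0.2, hR]
  have habs : ‖(⟨p, q⟩ : ℂ)‖ = R := by
    rw [Complex.norm_def, Complex.normSq_mk]
    have : p * p + q * q = R ^ 2 := by nlinarith
    rw [this, Real.sqrt_sq hR.le]
  refine ⟨Complex.arg ⟨p, q⟩, ?_, ?_⟩
  · rw [Complex.cos_arg hz, habs]
    field_simp
  · rw [Complex.sin_arg, habs]
    field_simp

lemma hamVF_H (a b : ℝ) (ha : a ≠ 0) (hb : b ≠ 0) (H : (Fin 4 → ℝ) → ℝ)
    (hHdef : ∀ x : Fin 4 → ℝ,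
      H x = ((x 0) ^ 2 + (x 1) ^ 2) / a + ((x 2) ^ 2 + (x 3) ^ 2) / b)
    (x : Fin 4 → ℝ) :
    hamVF H x = ![2/a * x 1, -(2/a * x 0), 2/b * x 3, -(2/b * x 2)] := by
  have hH : H = fun x : Fin 4 → ℝ =>
      a⁻¹ * (x 0 * x 0 + x 1 * x 1) + b⁻¹ * (x 2 * x 2 + x 3 * x 3) := by
    funext y; rw [hHdef]; field_simp
  subst hH
  have hproj : ∀ i : Fin 4, HasFDerivAt (fun x : Fin 4 → ℝ => x i)
      (ContinuousLinearMap.proj i : (Fin 4 → ℝ) →L[ℝ] ℝ) x :=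
    fun i => (ContinuousLinearMap.proj (R := ℝ) (φ := fun _ : Fin 4 => ℝ) i).hasFDerivAt
  have hd : HasFDerivAt (fun x : Fin 4 → ℝ =>
      a⁻¹ * (x 0 * x 0 + x 1 * x 1) + b⁻¹ * (x 2 * x 2 + x 3 * x 3))
      (a⁻¹ • ((x 0 • (ContinuousLinearMap.proj 0 : (Fin 4 → ℝ) →L[ℝ] ℝ)
                + x 0 • (ContinuousLinearMap.proj 0 : (Fin 4 → ℝ) →L[ℝ] ℝ)) +
              (x 1 • (ContinuousLinearMap.proj 1 : (Fin 4 → ℝ) →L[ℝ] ℝ)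
                + x 1 • (ContinuousLinearMap.proj 1 : (Fin 4 → ℝ) →L[ℝ] ℝ))) +
       b⁻¹ • ((x 2 • (ContinuousLinearMap.proj 2 : (Fin 4 → ℝ) →L[ℝ] ℝ)
                + x 2 • (ContinuousLinearMap.proj 2 : (Fin 4 → ℝ) →L[ℝ] ℝ)) +
              (x 3 • (ContinuousLinearMap.proj 3 : (Fin 4 → ℝ) →L[ℝ] ℝ)
                + x 3 • (ContinuousLinearMap.proj 3 : (Fin 4 → ℝ) →L[ℝ] ℝ)))) x := by
    exact ((((hproj 0).mul (hproj 0)).add ((hproj 1).mul (hproj 1))).const_mul a⁻¹).add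
      ((((hproj 2).mul (hproj 2)).add ((hproj 3).mul (hproj 3))).const_mul b⁻¹)
  rw [hamVF, hd.fderiv]
  funext i
  fin_cases i <;>
    simp [ContinuousLinearMap.proj_apply, Pi.single_apply, Matrix.cons_val_zero,
      Matrix.cons_val_one, Matrix.head_cons] <;>
    ring

lemma hasDerivAt_mul_cos (c ω t : ℝ) :
    HasDerivAt (fun t => c * Real.cos (ω * t)) (-(c * ω * Real.sin (ω * t))) t := by
  have h1 : HasDerivAt (fun u : ℝ => Real.cos (ω * u)) (-Real.sin (ω * t) * ω) t := by
    simpa [Function.comp_def] using (Real.hasDerivAt_cos (ω * t)).comp t ((hasDerivAt_id t).const_mul ω)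
  have := h1.const_mul c
  exact this.congr_deriv (by ring)

lemma hasDerivAt_neg_mul_sin (c ω t : ℝ) :
    HasDerivAt (fun t => -(c * Real.sin (ω * t))) (-(c * ω * Real.cos (ω * t))) t := by
  have h1 : HasDerivAt (fun u : ℝ => Real.sin (ω * u)) (Real.cos (ω * t) * ω) t := by
    simpa [Function.comp_def] using (Real.hasDerivAt_sin (ω * t)).comp t ((hasDerivAt_id t).const_mul ω)
  have := (h1.const_mul c).neg
  exact this.congr_deriv (by ring)

lemma vec4_eta (y : Fin 4 → ℝ) : y = ![y 0, y 1, y 2, y 3] := by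
  funext i
  fin_cases i <;> rfl

lemma hasDerivAt_vec4 {f0 f1 f2 f3 : ℝ → ℝ} {d : Fin 4 → ℝ} {t : ℝ}
    (h0 : HasDerivAt f0 (d 0) t) (h1 : HasDerivAt f1 (d 1) t)
    (h2 : HasDerivAt f2 (d 2) t) (h3 : HasDerivAt f3 (d 3) t) :
    HasDerivAt (fun x => ![f0 x, f1 x, f2 x, f3 x]) d t := by
  apply hasDerivAt_pi.2
  intro i
  fin_cases i
  · exact h0
  · exact h1
  · exact h2
  · exact h3

lemma forward_case (a b : ℝ) (ha : 0 < a) (hb : 0 < b) (hab : Irrational (a / b))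
    (H : (Fin 4 → ℝ) → ℝ)
    (hHdef : ∀ x : Fin 4 → ℝ,
      H x = ((x 0) ^ 2 + (x 1) ^ 2) / a + ((x 2) ^ 2 + (x 3) ^ 2) / b)
    (s : ℝ) (hs : 0 < s)
    (Γ : Set (Fin 4 → ℝ)) (hco : IsClosedOrbit H Γ) (hsub' : Γ ⊆ H ⁻¹' {s}) :
    Γ = {x : Fin 4 → ℝ | x 2 = 0 ∧ x 3 = 0 ∧ (x 0) ^ 2 + (x 1) ^ 2 = a * s} ∨
    Γ = {x : Fin 4 → ℝ | x 0 = 0 ∧ x 1 = 0 ∧ (x 2) ^ 2 + (x 3) ^ 2 = b * s} := by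
  have ha' : a ≠ 0 := ha.ne'
  have hb' : b ≠ 0 := hb.ne'
  have hVF := hamVF_H a b ha' hb' H hHdef
  have hcs : ∀ u : ℝ, Real.sin u ^ 2 + Real.cos u ^ 2 = 1 := Real.sin_sq_add_cos_sq
  revert hsub'
  rcases hco with ⟨γ, htraj, ⟨T, hT, hper⟩, ⟨t₀, hnc⟩, rfl⟩
  intro hsub
  have hcomp : ∀ (t : ℝ) (i : Fin 4), HasDerivAt (fun t => γ t i) (hamVF H (γ t) i) t :=
    fun t i => hasDerivAt_pi.1 (htraj t) i
  have hf0 : ∀ t, HasDerivAt (fun t => γ t 0) ((2/a) * γ t 1) t := by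
    intro t; have h := hcomp t 0; rw [hVF] at h; simpa using h
  have hf1 : ∀ t, HasDerivAt (fun t => γ t 1) (-((2/a) * γ t 0)) t := by
    intro t; have h := hcomp t 1; rw [hVF] at h; simpa using h
  have hf2 : ∀ t, HasDerivAt (fun t => γ t 2) ((2/b) * γ t 3) t := by
    intro t; have h := hcomp t 2; rw [hVF] at h; simpa using h
  have hf3 : ∀ t, HasDerivAt (fun t => γ t 3) (-((2/b) * γ t 2)) t := by
    intro t; have h := hcomp t 3; rw [hVF] at h; simpa using h
  have sol1 := fun t => rot_sol hf0 hf1 t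
  have sol2 := fun t => rot_sol hf2 hf3 t
  have hlev : ∀ t, ((γ t 0)^2 + (γ t 1)^2)/a + ((γ t 2)^2 + (γ t 3)^2)/b = s := by
    intro t
    have := hsub (Set.mem_range_self t)
    rw [Set.mem_preimage, Set.mem_singleton_iff, hHdef] at this
    exact this
  have n1 : ∀ t, (γ t 0)^2 + (γ t 1)^2 = (γ 0 0)^2 + (γ 0 1)^2 := by
    intro t
    obtain ⟨e1, e2⟩ := sol1 t
    rw [e1, e2]
    linear_combination ((γ 0 0)^2 + (γ 0 1)^2) * hcs (2/a * t)
  have n2 : ∀ t, (γ t 2)^2 + (γ t 3)^2 = (γ 0 2)^2 + (γ 0 3)^2 := by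
    intro t
    obtain ⟨e1, e2⟩ := sol2 t
    rw [e1, e2]
    linear_combination ((γ 0 2)^2 + (γ 0 3)^2) * hcs (2/b * t)
  by_cases hpq : (γ 0 0)^2 + (γ 0 1)^2 = 0
  · have hp0 : γ 0 0 = 0 := by nlinarith [sq_nonneg (γ 0 0), sq_nonneg (γ 0 1)]
    have hq0 : γ 0 1 = 0 := by nlinarith [sq_nonneg (γ 0 0), sq_nonneg (γ 0 1)]
    have hz0 : ∀ t, γ t 0 = 0 := by
      intro t; rw [(sol1 t).1, hp0, hq0]; ring
    have hz1 : ∀ t, γ t 1 = 0 := by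
      intro t; rw [(sol1 t).2, hp0, hq0]; ring
    by_cases huv : (γ 0 2)^2 + (γ 0 3)^2 = 0
    · exfalso
      have hu0 : γ 0 2 = 0 := by nlinarith [sq_nonneg (γ 0 2), sq_nonneg (γ 0 3)]
      have hv0 : γ 0 3 = 0 := by nlinarith [sq_nonneg (γ 0 2), sq_nonneg (γ 0 3)]
      apply hnc
      funext i
      fin_cases i
      · show γ t₀ 0 = γ 0 0
        rw [hz0, hz0]
      · show γ t₀ 1 = γ 0 1
        rw [hz1, hz1]
      · show γ t₀ 2 = γ 0 2
        rw [(sol2 t₀).1, hu0, hv0]; ring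
      · show γ t₀ 3 = γ 0 3
        rw [(sol2 t₀).2, hu0, hv0]; ring
    · -- the orbit is the second circle
      right
      have hrad : (γ 0 2)^2 + (γ 0 3)^2 = b * s := by
        have h := hlev 0
        rw [hp0, hq0] at h
        field_simp at h
        exact mul_left_cancel₀ ha' (by linarith)
      have hR : (0:ℝ) < Real.sqrt (b*s) := Real.sqrt_pos.2 (by positivity)
      have hR2 : Real.sqrt (b*s) ^ 2 = b * s := Real.sq_sqrt (by positivity)
      ext y
      simp only [Set.mem_range, Set.mem_setOf_eq]
      constructor
      · rintro ⟨t, rfl⟩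
        exact ⟨hz0 t, hz1 t, by rw [n2 t, hrad]⟩
      · rintro ⟨hy0, hy1, hy2⟩
        obtain ⟨α, hα1, hα2⟩ := exists_polar (γ 0 2) (γ 0 3) hR (by rw [hR2]; exact hrad)
        obtain ⟨β, hβ1, hβ2⟩ := exists_polar (y 2) (y 3) hR (by rw [hR2]; exact hy2)
        refine ⟨(α - β)/(2/b), ?_⟩
        have ht : (2:ℝ)/b * ((α - β)/(2/b)) = α - β := by field_simp
        have key1 : Real.cos α * Real.cos (α-β) + Real.sin α * Real.sin (α-β)
            = Real.cos β := by
          rw [← Real.cos_sub]; congr 1; ring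
        have key2 : Real.sin α * Real.cos (α-β) - Real.cos α * Real.sin (α-β)
            = Real.sin β := by
          rw [← Real.sin_sub]; congr 1; ring
        funext i
        fin_cases i
        · show γ _ 0 = y 0
          rw [hz0, hy0]
        · show γ _ 1 = y 1
          rw [hz1, hy1]
        · show γ _ 2 = y 2
          rw [(sol2 _).1, ht, hα1, hα2, hβ1]
          linear_combination Real.sqrt (b*s) * key1
        · show γ _ 3 = y 3
          rw [(sol2 _).2, ht, hα1, hα2, hβ2]
          linear_combination Real.sqrt (b*s) * key2
  · by_cases huv : (γ 0 2)^2 + (γ 0 3)^2 = 0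
    · -- the orbit is the first circle
      left
      have hu0 : γ 0 2 = 0 := by nlinarith [sq_nonneg (γ 0 2), sq_nonneg (γ 0 3)]
      have hv0 : γ 0 3 = 0 := by nlinarith [sq_nonneg (γ 0 2), sq_nonneg (γ 0 3)]
      have hz2 : ∀ t, γ t 2 = 0 := by
        intro t; rw [(sol2 t).1, hu0, hv0]; ring
      have hz3 : ∀ t, γ t 3 = 0 := by
        intro t; rw [(sol2 t).2, hu0, hv0]; ring
      have hrad : (γ 0 0)^2 + (γ 0 1)^2 = a * s := by
        have h := hlev 0
        rw [hu0, hv0] at h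
        field_simp at h
        exact mul_right_cancel₀ hb' (by linarith)
      have hR : (0:ℝ) < Real.sqrt (a*s) := Real.sqrt_pos.2 (by positivity)
      have hR2 : Real.sqrt (a*s) ^ 2 = a * s := Real.sq_sqrt (by positivity)
      ext y
      simp only [Set.mem_range, Set.mem_setOf_eq]
      constructor
      · rintro ⟨t, rfl⟩
        exact ⟨hz2 t, hz3 t, by rw [n1 t, hrad]⟩
      · rintro ⟨hy2, hy3, hy01⟩
        obtain ⟨α, hα1, hα2⟩ := exists_polar (γ 0 0) (γ 0 1) hR (by rw [hR2]; exact hrad)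
        obtain ⟨β, hβ1, hβ2⟩ := exists_polar (y 0) (y 1) hR (by rw [hR2]; exact hy01)
        refine ⟨(α - β)/(2/a), ?_⟩
        have ht : (2:ℝ)/a * ((α - β)/(2/a)) = α - β := by field_simp
        have key1 : Real.cos α * Real.cos (α-β) + Real.sin α * Real.sin (α-β)
            = Real.cos β := by
          rw [← Real.cos_sub]; congr 1; ring
        have key2 : Real.sin α * Real.cos (α-β) - Real.cos α * Real.sin (α-β)
            = Real.sin β := by
          rw [← Real.sin_sub]; congr 1; ring
        funext i
        fin_cases i
        · show γ _ 0 = y 0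
          rw [(sol1 _).1, ht, hα1, hα2, hβ1]
          linear_combination Real.sqrt (a*s) * key1
        · show γ _ 1 = y 1
          rw [(sol1 _).2, ht, hα1, hα2, hβ2]
          linear_combination Real.sqrt (a*s) * key2
        · show γ _ 2 = y 2
          rw [hz2, hy2]
        · show γ _ 3 = y 3
          rw [hz3, hy3]
    · -- both planes active: contradiction with irrationality
      exfalso
      have hγT : γ T = γ 0 := by
        have := hper 0; rwa [zero_add] at this
      have e1 : γ 0 0 * Real.cos (2/a * T) + γ 0 1 * Real.sin (2/a * T) = γ 0 0 := by
        have := (sol1 T).1; rw [hγT] at this; linarith [this]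
      have e2 : -(γ 0 0) * Real.sin (2/a * T) + γ 0 1 * Real.cos (2/a * T) = γ 0 1 := by
        have := (sol1 T).2; rw [hγT] at this; linarith [this]
      have e3 : γ 0 2 * Real.cos (2/b * T) + γ 0 3 * Real.sin (2/b * T) = γ 0 2 := by
        have := (sol2 T).1; rw [hγT] at this; linarith [this]
      have e4 : -(γ 0 2) * Real.sin (2/b * T) + γ 0 3 * Real.cos (2/b * T) = γ 0 3 := by
        have := (sol2 T).2; rw [hγT] at this; linarith [this]
      have cos1 : Real.cos (2/a * T) = 1 := by
        have hmul : ((γ 0 0)^2 + (γ 0 1)^2) * Real.cos (2/a * T)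
            = ((γ 0 0)^2 + (γ 0 1)^2) * 1 := by
          linear_combination γ 0 0 * e1 + γ 0 1 * e2
        exact mul_left_cancel₀ hpq hmul
      have cos2 : Real.cos (2/b * T) = 1 := by
        have hmul : ((γ 0 2)^2 + (γ 0 3)^2) * Real.cos (2/b * T)
            = ((γ 0 2)^2 + (γ 0 3)^2) * 1 := by
          linear_combination γ 0 2 * e3 + γ 0 3 * e4
        exact mul_left_cancel₀ huv hmul
      obtain ⟨n, hn⟩ := (Real.cos_eq_one_iff _).1 cos1
      obtain ⟨m, hm⟩ := (Real.cos_eq_one_iff _).1 cos2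
      have hn0 : (n:ℝ) ≠ 0 := by
        intro h0
        rw [h0, zero_mul] at hn
        have : (0:ℝ) < 2/a * T := by positivity
        linarith
      have h1 : (n:ℝ) * (2*Real.pi) * a = 2 * T := by
        rw [hn]; field_simp
      have h2 : (m:ℝ) * (2*Real.pi) * b = 2 * T := by
        rw [hm]; field_simp
      have key : (2*Real.pi) * ((n:ℝ) * a) = (2*Real.pi) * ((m:ℝ) * b) := by
        linear_combination h1 - h2
      have hnab : (n:ℝ) * a = (m:ℝ) * b :=
        mul_left_cancel₀ (by positivity) key
      apply hab
      refine ⟨(m:ℚ)/(n:ℚ), ?_⟩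
      push_cast
      rw [div_eq_div_iff hn0 hb']
      linear_combination -hnab


lemma circle1_orbit (a b : ℝ) (ha : 0 < a) (hb : 0 < b) (hab : Irrational (a / b))
    (H : (Fin 4 → ℝ) → ℝ)
    (hHdef : ∀ x : Fin 4 → ℝ,
      H x = ((x 0) ^ 2 + (x 1) ^ 2) / a + ((x 2) ^ 2 + (x 3) ^ 2) / b)
    (s : ℝ) (hs : 0 < s) :
    IsClosedOrbit H {x : Fin 4 → ℝ | x 2 = 0 ∧ x 3 = 0 ∧ (x 0) ^ 2 + (x 1) ^ 2 = a * s} ∧ {x : Fin 4 → ℝ | x 2 = 0 ∧ x 3 = 0 ∧ (x 0) ^ 2 + (x 1) ^ 2 = a * s} ⊆ H ⁻¹' {s} := by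
  have ha' : a ≠ 0 := ha.ne'
  have hb' : b ≠ 0 := hb.ne'
  have hVF := hamVF_H a b ha' hb' H hHdef
  have hcs : ∀ u : ℝ, Real.sin u ^ 2 + Real.cos u ^ 2 = 1 := Real.sin_sq_add_cos_sq
  have hR : (0:ℝ) < Real.sqrt (a*s) := Real.sqrt_pos.2 (by positivity)
  have hR2 : Real.sqrt (a*s)^2 = a*s := Real.sq_sqrt (by positivity)
  have hval : ∀ t : ℝ, (Real.sqrt (a*s) * Real.cos (2/a*t))^2
      + (-(Real.sqrt (a*s) * Real.sin (2/a*t)))^2 = a*s := by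
    intro t
    linear_combination Real.sqrt (a*s)^2 * hcs (2/a*t) + hR2
  refine ⟨⟨fun t => ![Real.sqrt (a*s) * Real.cos (2/a*t), -(Real.sqrt (a*s) * Real.sin (2/a*t)), 0, 0], ?_,
    ⟨Real.pi * a, by positivity, ?_⟩, ⟨Real.pi*a/2, ?_⟩, ?_⟩, ?_⟩
  · -- trajectory
    intro t
    rw [hVF]
    simp only [Matrix.cons_val_zero, Matrix.cons_val_one, Matrix.head_cons,
      Matrix.cons_val_two, Matrix.cons_val_three, Matrix.tail_cons, mul_zero, neg_zero]
    refine hasDerivAt_vec4 ?_ ?_ ?_ ?_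
    · simp only [Matrix.cons_val_zero]
      convert hasDerivAt_mul_cos (Real.sqrt (a*s)) (2/a) t using 1
      ring
    · simp only [Matrix.cons_val_one, Matrix.head_cons, Matrix.cons_val_zero]
      convert hasDerivAt_neg_mul_sin (Real.sqrt (a*s)) (2/a) t using 1
      ring
    · simp only [Matrix.cons_val_two, Matrix.tail_cons, Matrix.head_cons]
      exact hasDerivAt_const t 0
    · simp only [Matrix.cons_val_three, Matrix.tail_cons, Matrix.head_cons]
      exact hasDerivAt_const t 0
  · -- periodic
    intro t
    show (![Real.sqrt (a*s) * Real.cos (2/a*(t + Real.pi * a)), -(Real.sqrt (a*s) * Real.sin (2/a*(t + Real.pi * a))), 0, 0] : Fin 4 → ℝ) = ![Real.sqrt (a*s) * Real.cos (2/a*t), -(Real.sqrt (a*s) * Real.sin (2/a*t)), 0, 0]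
    rw [show 2/a*(t + Real.pi * a) = 2/a*t + 2*Real.pi by field_simp,
      Real.cos_add_two_pi, Real.sin_add_two_pi]
  · -- nonconstant
    intro h
    have h0 := congrFun h 0
    simp only [Matrix.cons_val_zero] at h0
    rw [show 2/a * (Real.pi*a/2) = Real.pi by field_simp] at h0
    rw [mul_zero, Real.cos_pi, Real.cos_zero] at h0
    nlinarith [hR, h0]
  · -- the circle is the range
    ext y
    simp only [Set.mem_setOf_eq, Set.mem_range]
    constructor
    · rintro ⟨hyA, hyB, hyr⟩
      obtain ⟨β, hβ1, hβ2⟩ := exists_polar (y 0) (y 1) hR (by rw [hR2]; exact hyr)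
      refine ⟨-β/(2/a), ?_⟩
      show (![Real.sqrt (a*s) * Real.cos (2/a * (-β/(2/a))), -(Real.sqrt (a*s) * Real.sin (2/a * (-β/(2/a)))), 0, 0] : Fin 4 → ℝ) = y
      rw [vec4_eta y, hyA, hyB, hβ1, hβ2,
        show 2/a * (-β/(2/a)) = -β by field_simp,
        Real.cos_neg, Real.sin_neg, mul_neg, neg_neg]
    · rintro ⟨t, rfl⟩
      refine ⟨?_, ?_, ?_⟩
      · simp only [Matrix.cons_val_two, Matrix.tail_cons, Matrix.head_cons]
      · simp only [Matrix.cons_val_three, Matrix.tail_cons, Matrix.head_cons]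
      · simp only [Matrix.cons_val_zero, Matrix.cons_val_one, Matrix.head_cons]
        exact hval t
  · -- contained in the level set
    rintro y ⟨hyA, hyB, hyr⟩
    rw [Set.mem_preimage, Set.mem_singleton_iff, hHdef, hyA, hyB, hyr]
    field_simp
    ring

lemma circle2_orbit (a b : ℝ) (ha : 0 < a) (hb : 0 < b) (hab : Irrational (a / b))
    (H : (Fin 4 → ℝ) → ℝ)
    (hHdef : ∀ x : Fin 4 → ℝ,
      H x = ((x 0) ^ 2 + (x 1) ^ 2) / a + ((x 2) ^ 2 + (x 3) ^ 2) / b)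
    (s : ℝ) (hs : 0 < s) :
    IsClosedOrbit H {x : Fin 4 → ℝ | x 0 = 0 ∧ x 1 = 0 ∧ (x 2) ^ 2 + (x 3) ^ 2 = b * s} ∧ {x : Fin 4 → ℝ | x 0 = 0 ∧ x 1 = 0 ∧ (x 2) ^ 2 + (x 3) ^ 2 = b * s} ⊆ H ⁻¹' {s} := by
  have ha' : a ≠ 0 := ha.ne'
  have hb' : b ≠ 0 := hb.ne'
  have hVF := hamVF_H a b ha' hb' H hHdef
  have hcs : ∀ u : ℝ, Real.sin u ^ 2 + Real.cos u ^ 2 = 1 := Real.sin_sq_add_cos_sq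
  have hR : (0:ℝ) < Real.sqrt (b*s) := Real.sqrt_pos.2 (by positivity)
  have hR2 : Real.sqrt (b*s)^2 = b*s := Real.sq_sqrt (by positivity)
  have hval : ∀ t : ℝ, (Real.sqrt (b*s) * Real.cos (2/b*t))^2
      + (-(Real.sqrt (b*s) * Real.sin (2/b*t)))^2 = b*s := by
    intro t
    linear_combination Real.sqrt (b*s)^2 * hcs (2/b*t) + hR2
  refine ⟨⟨fun t => ![0, 0, Real.sqrt (b*s) * Real.cos (2/b*t), -(Real.sqrt (b*s) * Real.sin (2/b*t))], ?_,
    ⟨Real.pi * b, by positivity, ?_⟩, ⟨Real.pi*b/2, ?_⟩, ?_⟩, ?_⟩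
  · -- trajectory
    intro t
    rw [hVF]
    simp only [Matrix.cons_val_zero, Matrix.cons_val_one, Matrix.head_cons,
      Matrix.cons_val_two, Matrix.cons_val_three, Matrix.tail_cons, mul_zero, neg_zero]
    refine hasDerivAt_vec4 ?_ ?_ ?_ ?_
    · simp only [Matrix.cons_val_zero]
      exact hasDerivAt_const t 0
    · simp only [Matrix.cons_val_one, Matrix.head_cons]
      exact hasDerivAt_const t 0
    · simp only [Matrix.cons_val_two, Matrix.tail_cons, Matrix.head_cons]
      convert hasDerivAt_mul_cos (Real.sqrt (b*s)) (2/b) t using 1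
      ring
    · simp only [Matrix.cons_val_three, Matrix.tail_cons, Matrix.head_cons]
      convert hasDerivAt_neg_mul_sin (Real.sqrt (b*s)) (2/b) t using 1
      ring
  · -- periodic
    intro t
    show (![0, 0, Real.sqrt (b*s) * Real.cos (2/b*(t + Real.pi * b)), -(Real.sqrt (b*s) * Real.sin (2/b*(t + Real.pi * b)))] : Fin 4 → ℝ) = ![0, 0, Real.sqrt (b*s) * Real.cos (2/b*t), -(Real.sqrt (b*s) * Real.sin (2/b*t))]
    rw [show 2/b*(t + Real.pi * b) = 2/b*t + 2*Real.pi by field_simp,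
      Real.cos_add_two_pi, Real.sin_add_two_pi]
  · -- nonconstant
    intro h
    have h0 := congrFun h 2
    simp only [Matrix.cons_val_two, Matrix.tail_cons, Matrix.head_cons] at h0
    rw [show 2/b * (Real.pi*b/2) = Real.pi by field_simp] at h0
    rw [mul_zero, Real.cos_pi, Real.cos_zero] at h0
    nlinarith [hR, h0]
  · -- the circle is the range
    ext y
    simp only [Set.mem_setOf_eq, Set.mem_range]
    constructor
    · rintro ⟨hyA, hyB, hyr⟩
      obtain ⟨β, hβ1, hβ2⟩ := exists_polar (y 2) (y 3) hR (by rw [hR2]; exact hyr)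
      refine ⟨-β/(2/b), ?_⟩
      show (![0, 0, Real.sqrt (b*s) * Real.cos (2/b * (-β/(2/b))), -(Real.sqrt (b*s) * Real.sin (2/b * (-β/(2/b))))] : Fin 4 → ℝ) = y
      rw [vec4_eta y, hyA, hyB, hβ1, hβ2,
        show 2/b * (-β/(2/b)) = -β by field_simp,
        Real.cos_neg, Real.sin_neg, mul_neg, neg_neg]
    · rintro ⟨t, rfl⟩
      refine ⟨?_, ?_, ?_⟩
      · simp only [Matrix.cons_val_zero]
      · simp only [Matrix.cons_val_one, Matrix.head_cons, Matrix.cons_val_zero]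
      · simp only [Matrix.cons_val_two, Matrix.cons_val_three, Matrix.tail_cons,
          Matrix.head_cons]
        exact hval t
  · -- contained in the level set
    rintro y ⟨hyA, hyB, hyr⟩
    rw [Set.mem_preimage, Set.mem_singleton_iff, hHdef, hyA, hyB, hyr]
    field_simp
    ring

theorem ellipsoid_exactly_two_closed_orbits
    (a b : ℝ) (ha : 0 < a) (hb : 0 < b) (hab : Irrational (a / b))
    (H : (Fin 4 → ℝ) → ℝ)
    (hHdef : ∀ x : Fin 4 → ℝ,
      H x = ((x 0) ^ 2 + (x 1) ^ 2) / a + ((x 2) ^ 2 + (x 3) ^ 2) / b) :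
    ∀ s : ℝ, 0 < s →
      {Γ : Set (Fin 4 → ℝ) | IsClosedOrbit H Γ ∧ Γ ⊆ H ⁻¹' {s}} =
        {{x : Fin 4 → ℝ | x 2 = 0 ∧ x 3 = 0 ∧ (x 0) ^ 2 + (x 1) ^ 2 = a * s},
         {x : Fin 4 → ℝ | x 0 = 0 ∧ x 1 = 0 ∧ (x 2) ^ 2 + (x 3) ^ 2 = b * s}} := by
  intro s hs
  ext Γ
  simp only [Set.mem_setOf_eq, Set.mem_insert_iff, Set.mem_singleton_iff]
  constructor
  · rintro ⟨hco, hsub⟩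
    exact forward_case a b ha hb hab H hHdef s hs Γ hco hsub
  · rintro (rfl | rfl)
    · exact circle1_orbit a b ha hb hab H hHdef s hs
    · exact circle2_orbit a b ha hb hab H hHdef s hs
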